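/- Define L(z) = (1/2) log(z - 1/2 + √z·√(z-1)) for z in the upper half-plane ℂ₊, using the principal branches of log and square root. Then L is holomorphic and injective on ℂ₊, its image is the strip S = {u+iv : u > (1/2)ln(1/2), 0 < v < π/2}, and L'(z) = 1/(2√z·√(z-1)) for all z ∈ ℂ₊. -/

import Mathlib

/-- `L(z) = (1/2) log(z - 1/2 + √z √(z-1))`, with principal branches of `log` and of the
square root (realized by the principal complex power `w ^ (1/2)`). -/
noncomputable def Lfun (z : ℂ) : ℂ :=
  (1/2) * Complex.log (z - 1/2 + z ^ (1/2 : ℂ) * (z - 1) ^ (1/2 : ℂ))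

open Complex Real

noncomputable def sfun (z : ℂ) : ℂ := z ^ (1/2:ℂ) * (z - 1) ^ (1/2:ℂ)
noncomputable def Afun (z : ℂ) : ℂ := z - 1/2 + sfun z

lemma Lfun_eq (z : ℂ) : Lfun z = (1/2) * Complex.log (Afun z) := rfl

lemma sqrt_mul_self' {z : ℂ} (hz : z ≠ 0) : z ^ (1/2:ℂ) * z ^ (1/2:ℂ) = z := by
  rw [← cpow_add _ _ hz]; norm_num

lemma arg01 {z : ℂ} (hz : 0 < z.im) : 0 < z.arg ∧ z.arg < Real.pi := by
  constructor
  · rcases lt_or_eq_of_le ((Complex.arg_nonneg_iff).mpr hz.le) with h | h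
    · exact h
    · exact absurd ((Complex.arg_eq_zero_iff).mp h.symm).2 (ne_of_gt hz)
  · exact Complex.arg_lt_pi_iff.mpr (Or.inr (ne_of_gt hz))

lemma sqrt_parts {z : ℂ} (hz : 0 < z.im) :
    0 < (z ^ (1/2:ℂ)).re ∧ 0 < (z ^ (1/2:ℂ)).im := by
  have h0 : z ≠ 0 := fun h => by simp [h] at hz
  obtain ⟨harg0, hargpi⟩ := arg01 hz
  rw [Complex.cpow_def_of_ne_zero h0, Complex.exp_re, Complex.exp_im]
  have him : (Complex.log z * (1/2:ℂ)).im = z.arg / 2 := by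
    simp [Complex.mul_im, Complex.log_im]; ring
  rw [him]
  exact ⟨mul_pos (Real.exp_pos _)
      (Real.cos_pos_of_mem_Ioo ⟨by linarith [Real.pi_pos], by linarith⟩),
    mul_pos (Real.exp_pos _)
      (Real.sin_pos_of_pos_of_lt_pi (by linarith) (by linarith))⟩

lemma s_im_pos {z : ℂ} (hz : 0 < z.im) : 0 < (sfun z).im := by
  have h1 : (0:ℝ) < (z - 1).im := by simp [hz]
  obtain ⟨ar, ai⟩ := sqrt_parts hz
  obtain ⟨br, bi⟩ := sqrt_parts h1
  rw [sfun, Complex.mul_im]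
  positivity

lemma s_sq {z : ℂ} (hz : 0 < z.im) : sfun z * sfun z = z * (z - 1) := by
  have h0 : z ≠ 0 := fun h => by simp [h] at hz
  have h1im : (0:ℝ) < (z - 1).im := by simp [hz]
  have h1 : z - 1 ≠ 0 := fun h => by simp [h] at h1im
  rw [sfun]
  calc z ^ (1/2:ℂ) * (z-1) ^ (1/2:ℂ) * (z ^ (1/2:ℂ) * (z-1) ^ (1/2:ℂ))
      = (z ^ (1/2:ℂ) * z ^ (1/2:ℂ)) * ((z-1) ^ (1/2:ℂ) * (z-1) ^ (1/2:ℂ)) := by ring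
    _ = z * (z - 1) := by rw [sqrt_mul_self' h0, sqrt_mul_self' h1]

lemma A_im_pos {z : ℂ} (hz : 0 < z.im) : 0 < (Afun z).im := by
  have := s_im_pos hz
  rw [Afun]
  simp only [Complex.add_im, Complex.sub_im]
  norm_num
  linarith

lemma A_mul {z : ℂ} (hz : 0 < z.im) : Afun z * (z - 1/2 - sfun z) = 1/4 := by
  have h := s_sq hz
  rw [Afun]
  linear_combination -h

lemma A_ne {z : ℂ} (hz : 0 < z.im) : Afun z ≠ 0 := by
  intro h
  have := A_mul hz
  rw [h, zero_mul] at this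
  norm_num at this

lemma A_abs {z : ℂ} (hz : 0 < z.im) : 1/2 < ‖Afun z‖ := by
  have hsim := s_im_pos hz
  have himeq : 2 * (sfun z).re * (sfun z).im = 2 * z.re * z.im - z.im := by
    have h := congrArg Complex.im (s_sq hz)
    simp [Complex.mul_im, Complex.sub_im, Complex.sub_re] at h
    nlinarith [h]
  have key : 2 * (sfun z).im * ((z.re - 1/2) * (sfun z).re + z.im * (sfun z).im)
      = z.im * (2*z.re - 1)^2 / 2 + 2 * z.im * (sfun z).im^2 := by
    linear_combination (z.re - 1/2) * himeq
  have hE : 0 < (z.re - 1/2) * (sfun z).re + z.im * (sfun z).im := by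
    nlinarith [mul_pos hz (mul_pos hsim hsim), mul_nonneg hz.le (sq_nonneg (2*z.re - 1))]
  have h3 : Complex.normSq (z - 1/2 - sfun z) < Complex.normSq (Afun z) := by
    rw [Afun]
    simp only [Complex.normSq_apply, Complex.add_re, Complex.add_im, Complex.sub_re,
      Complex.sub_im]
    norm_num
    nlinarith [hE]
  have habslt : ‖z - 1/2 - sfun z‖ < ‖Afun z‖ := by
    rw [Complex.norm_def, Complex.norm_def]
    exact Real.sqrt_lt_sqrt (Complex.normSq_nonneg _) h3
  have habsmul : ‖Afun z‖ * ‖z - 1/2 - sfun z‖ = 1/4 := by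
    rw [← norm_mul, A_mul hz]
    norm_num
  nlinarith [norm_nonneg (Afun z), norm_nonneg (z - 1/2 - sfun z)]

lemma exp_two_Lfun {z : ℂ} (hz : 0 < z.im) : Complex.exp (2 * Lfun z) = Afun z := by
  rw [Lfun_eq, show (2:ℂ) * ((1/2) * Complex.log (Afun z)) = Complex.log (Afun z) by ring]
  exact Complex.exp_log (A_ne hz)

lemma z_eq_of_A {z : ℂ} (hz : 0 < z.im) :
    z = (Afun z + (1/4) * (Afun z)⁻¹) / 2 + 1/2 := by
  have h := A_mul hz
  have h2 := s_sq hz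
  have hA := A_ne hz
  field_simp
  rw [Afun] at *
  linear_combination -2 * h - 6 * h2

lemma Lfun_mem {z : ℂ} (hz : 0 < z.im) :
    (1/2) * Real.log (1/2) < (Lfun z).re ∧ 0 < (Lfun z).im ∧ (Lfun z).im < Real.pi / 2 := by
  obtain ⟨ha0, hapi⟩ := arg01 (A_im_pos hz)
  have hre : (Lfun z).re = (1/2) * Real.log ‖Afun z‖ := by
    rw [Lfun_eq, Complex.mul_re, Complex.log_re]
    norm_num
  have him : (Lfun z).im = (1/2) * (Afun z).arg := by
    rw [Lfun_eq, Complex.mul_im, Complex.log_im]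
    norm_num
  refine ⟨?_, ?_, ?_⟩
  · rw [hre]
    have := Real.log_lt_log (by norm_num : (0:ℝ) < 1/2) (A_abs hz)
    linarith
  · rw [him]; linarith
  · rw [him]; linarith

lemma hasDeriv {z : ℂ} (hz : 0 < z.im) :
    HasDerivAt Lfun (1 / (2 * (z ^ (1/2 : ℂ) * (z - 1) ^ (1/2 : ℂ)))) z := by
  have h0 : z ≠ 0 := fun h => by simp [h] at hz
  have h1im : (0:ℝ) < (z - 1).im := by simp [hz]
  have h1 : z - 1 ≠ 0 := fun h => by simp [h] at h1im
  have hslit : z ∈ slitPlane := by rw [mem_slitPlane_iff]; exact Or.inr (ne_of_gt hz)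
  have hslit1 : z - 1 ∈ slitPlane := by rw [mem_slitPlane_iff]; exact Or.inr (ne_of_gt h1im)
  have hAslit : (z - 1/2 + z ^ (1/2:ℂ) * (z - 1) ^ (1/2:ℂ)) ∈ slitPlane := by
    rw [mem_slitPlane_iff]; exact Or.inr (ne_of_gt (A_im_pos hz))
  have ha : HasDerivAt (fun w : ℂ => w ^ (1/2:ℂ)) ((1/2:ℂ) * z ^ ((1/2:ℂ) - 1)) z :=
    (Complex.hasStrictDerivAt_cpow_const hslit).hasDerivAt
  have hb : HasDerivAt (fun w : ℂ => (w - 1) ^ (1/2:ℂ))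
      ((1/2:ℂ) * (z - 1) ^ ((1/2:ℂ) - 1) * 1) z :=
    HasDerivAt.cpow_const ((hasDerivAt_id z).sub_const 1) hslit1
  have hs := ha.mul hb
  have hA := (((hasDerivAt_id z).sub_const (1/2:ℂ))).add hs
  have hlog := (Complex.hasDerivAt_log hAslit).comp z hA
  have hfin := hlog.const_mul (1/2:ℂ)
  have hfun : Lfun = (fun w : ℂ => (1/2:ℂ) *
      ((fun w : ℂ => Complex.log w) ∘ fun w : ℂ => w - 1/2 + w ^ (1/2:ℂ) * (w - 1) ^ (1/2:ℂ)) w) := rfl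
  rw [hfun]
  refine hfin.congr_deriv (Eq.symm ?_)
  rw [cpow_sub _ _ h0, cpow_one, cpow_sub _ _ h1, cpow_one]
  have ha2 := sqrt_mul_self' h0
  have hb2 := sqrt_mul_self' h1
  have ha0 : z ^ (1/2:ℂ) ≠ 0 := fun h => by
    have := (sqrt_parts hz).1; rw [h] at this; simp at this
  have hb0 : (z - 1) ^ (1/2:ℂ) ≠ 0 := fun h => by
    have := (sqrt_parts h1im).1; rw [h] at this; simp at this
  have hA0 : z - 1/2 + z ^ (1/2:ℂ) * (z - 1) ^ (1/2:ℂ) ≠ 0 := A_ne hz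
  set a := z ^ (1/2:ℂ) with hadef
  set b := (z - 1) ^ (1/2:ℂ) with hbdef
  have h2ab : (2:ℂ) * (a * b) ≠ 0 := by
    simp [ha0, hb0]
  have hD : (1/2:ℂ) * (1 + (1/2 * (a/z) * b + a * (1/2 * (b/(z-1)) * 1))) * (2*(a*b))
      = z - 1/2 + a*b := by
    field_simp
    linear_combination ((2*z-1)*b*b) * ha2 + ((2*z-1)*z) * hb2
  rw [div_eq_iff h2ab,
    show (1/2:ℂ) * ((z - 1/2 + a*b)⁻¹ * (1 + (1/2 * (a/z) * b + a * (1/2 * (b/(z-1)) * 1)))) * (2*(a*b))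
      = (z - 1/2 + a*b)⁻¹ * ((1/2:ℂ) * (1 + (1/2 * (a/z) * b + a * (1/2 * (b/(z-1)) * 1))) * (2*(a*b))) from by ring,
    hD, inv_mul_cancel₀ hA0]

lemma surj {w : ℂ} (h1 : (1/2) * Real.log (1/2) < w.re) (h2 : 0 < w.im)
    (h3 : w.im < Real.pi / 2) : ∃ z : ℂ, 0 < z.im ∧ Lfun z = w := by
  set E := Complex.exp (2 * w) with hEdef
  set F := Complex.exp (-(2 * w)) with hFdef
  have hEF : E * F = 1 := by rw [hEdef, hFdef, ← Complex.exp_add]; simp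
  set z := (1/2 : ℂ) * (E + (1/4) * F) + 1/2 with hzdef
  have hre : (2 * w).re = 2 * w.re := by simp [Complex.mul_re]
  have him : (2 * w).im = 2 * w.im := by simp [Complex.mul_im]
  have hEim : E.im = Real.exp (2 * w.re) * Real.sin (2 * w.im) := by
    rw [hEdef, Complex.exp_im, hre, him]
  have hFim : F.im = -(Real.exp (-(2 * w.re)) * Real.sin (2 * w.im)) := by
    rw [hFdef, Complex.exp_im]
    simp [hre, him]
  have hsin : 0 < Real.sin (2 * w.im) :=
    Real.sin_pos_of_pos_of_lt_pi (by linarith) (by linarith)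
  have hexp : (1/2 : ℝ) < Real.exp (2 * w.re) := by
    have hlt : Real.log (1/2) < 2 * w.re := by linarith
    calc (1/2:ℝ) = Real.exp (Real.log (1/2)) := (Real.exp_log (by norm_num)).symm
      _ < Real.exp (2 * w.re) := Real.exp_lt_exp.mpr hlt
  have hexpneg : Real.exp (-(2 * w.re)) = (Real.exp (2 * w.re))⁻¹ := Real.exp_neg _
  have h4 : (0:ℝ) < Real.exp (2 * w.re) := Real.exp_pos _
  have h5 : (0:ℝ) < (Real.exp (2 * w.re))⁻¹ := by positivity
  have hinv : (Real.exp (2 * w.re))⁻¹ * Real.exp (2 * w.re) = 1 := by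
    field_simp
  have hzim : 0 < z.im := by
    rw [hzdef]
    simp only [Complex.add_im, Complex.mul_im, Complex.mul_re, Complex.add_re,
      Complex.one_im, Complex.one_re]
    norm_num
    rw [hEim, hFim, hexpneg]
    nlinarith [hsin, hexp, h4, h5, hinv, mul_pos hsin h5]
  refine ⟨z, hzim, ?_⟩
  set t := (1/2 : ℂ) * (E - (1/4) * F) with htdef
  have ht_sq : t * t = z * (z - 1) := by
    rw [htdef, hzdef]
    linear_combination (-1/4 : ℂ) * hEF
  have ht_im : 0 < t.im := by
    rw [htdef]
    simp only [Complex.mul_im, Complex.sub_im, Complex.sub_re, Complex.mul_re]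
    norm_num
    rw [hEim, hFim, hexpneg]
    nlinarith [hsin, h4, h5, mul_pos hsin h5, mul_pos hsin h4]
  have hs_eq : sfun z = t := by
    have h := s_sq hzim
    have hfact : (sfun z - t) * (sfun z + t) = 0 := by linear_combination h - ht_sq
    rcases mul_eq_zero.mp hfact with h' | h'
    · exact sub_eq_zero.mp h'
    · exfalso
      have heq : sfun z = -t := eq_neg_of_add_eq_zero_left h'
      have hsi := s_im_pos hzim
      rw [heq] at hsi
      simp only [Complex.neg_im] at hsi
      linarith
  have hA_eq : z - 1/2 + sfun z = E := by
    rw [hs_eq, htdef, hzdef]; ring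
  show (1/2) * Complex.log (z - 1/2 + z ^ (1/2 : ℂ) * (z - 1) ^ (1/2 : ℂ)) = w
  rw [show z ^ (1/2:ℂ) * (z - 1) ^ (1/2:ℂ) = sfun z from rfl, hA_eq, hEdef,
    Complex.log_exp (by rw [him]; linarith [Real.pi_pos]) (by rw [him]; linarith)]
  ring

/-- `L` is holomorphic and injective on the upper half-plane, its image is the strip
`S = {u+iv : u > (1/2)ln(1/2), 0 < v < π/2}`, and `L'(z) = 1/(2√z√(z-1))`. -/
theorem stmt11 :
    DifferentiableOn ℂ Lfun {z : ℂ | 0 < z.im} ∧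
    Set.InjOn Lfun {z : ℂ | 0 < z.im} ∧
    Lfun '' {z : ℂ | 0 < z.im} =
      {w : ℂ | (1/2) * Real.log (1/2) < w.re ∧ 0 < w.im ∧ w.im < Real.pi / 2} ∧
    ∀ z ∈ {z : ℂ | 0 < z.im},
      HasDerivAt Lfun (1 / (2 * (z ^ (1/2 : ℂ) * (z - 1) ^ (1/2 : ℂ)))) z := by
  refine ⟨?_, ?_, ?_, ?_⟩
  · intro z hz
    exact (hasDeriv hz).differentiableAt.differentiableWithinAt
  · intro z1 h1 z2 h2 heq
    have e1 : Afun z1 = Afun z2 := by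
      rw [← exp_two_Lfun h1, ← exp_two_Lfun h2, heq]
    rw [z_eq_of_A h1, z_eq_of_A h2, e1]
  · ext w
    simp only [Set.mem_image, Set.mem_setOf_eq]
    constructor
    · rintro ⟨z, hz, rfl⟩
      exact Lfun_mem hz
    · rintro ⟨hw1, hw2, hw3⟩
      obtain ⟨z, hz, hzw⟩ := surj hw1 hw2 hw3
      exact ⟨z, hz, hzw⟩
  · intro z hz
    exact hasDeriv hz
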